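/- Let G be a finite graph without loops and let P be a pot such that C_min(P) = {G} (up to isomorphism). Then in any assembly of G from P, no tile type of P is used on two adjacent vertices of G. -/

import Mathlib

/-!
Basic framework for flexible-tile DNA self-assembly.

Bond-edge types are elements of `Fin m`.  A cohesive end is either unhatted
(`Sum.inl a`) or hatted (`Sum.inr a`).  A tile is a finite multiset of cohesive
ends, and a pot is a finite set of tiles.
-/

/-- A tile over the bond-edge alphabet `Fin m`. -/
abbrev Tile (m : ℕ) : Type := Multiset (Fin m ⊕ Fin m)

/-- A pot: a finite set of tiles over the alphabet `Fin m`. -/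
abbrev Pot (m : ℕ) : Type := Finset (Tile m)

/-- A finite multigraph (nonempty finite vertex set, finite edge set; loops and
parallel edges allowed), edges recorded by their unordered pair of endpoints. -/
structure Multigraph where
  V : Type
  E : Type
  [fintypeV : Fintype V]
  [decEqV : DecidableEq V]
  [nonemptyV : Nonempty V]
  [fintypeE : Fintype E]
  ends : E → Sym2 V

attribute [instance] Multigraph.fintypeV Multigraph.decEqV
  Multigraph.nonemptyV Multigraph.fintypeE

/-- The order (number of vertices) of a multigraph. -/
def Multigraph.order (G : Multigraph) : ℕ := Fintype.card G.V

/-- An assembly of `G` from tiles over `Fin m`: each edge gets an orientation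
(an ordered pair of vertices compatible with its endpoints) and a bond-edge type. -/
structure Assembly (m : ℕ) (G : Multigraph) where
  orient : G.E → G.V × G.V
  label : G.E → Fin m
  orient_ends : ∀ e : G.E, G.ends e = s((orient e).1, (orient e).2)

/-- The tile of a vertex `v` under an assembly: one unhatted `a` for each edge
labeled `a` oriented out of `v`, one hatted `a` for each edge labeled `a`
oriented into `v`. -/
def Assembly.tileOf {m : ℕ} {G : Multigraph} (A : Assembly m G) (v : G.V) : Tile m :=
  (Finset.univ : Finset G.E).val.bind fun e =>
    (if (A.orient e).1 = v then {Sum.inl (A.label e)} else 0) +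
    (if (A.orient e).2 = v then {Sum.inr (A.label e)} else 0)

/-- `G` is realized by the pot `P`: there is an assembly of `G` all of whose
vertex tiles belong to `P`. -/
def Realizes {m : ℕ} (P : Pot m) (G : Multigraph) : Prop :=
  ∃ A : Assembly m G, ∀ v : G.V, A.tileOf v ∈ P

/-- `C(P)`: the class of multigraphs realized by `P`. -/
def CSet {m : ℕ} (P : Pot m) : Set Multigraph := {G | Realizes P G}

/-- `m_P`: the minimum order of a multigraph realized by `P`. -/
noncomputable def mP {m : ℕ} (P : Pot m) : ℕ :=
  sInf {n | ∃ G ∈ CSet P, G.order = n}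

/-- `C_min(P)`: the multigraphs realized by `P` of minimum order. -/
def Cmin {m : ℕ} (P : Pot m) : Set Multigraph :=
  {G ∈ CSet P | G.order = mP P}

/-- An isomorphism of multigraphs. -/
structure MultigraphIso (G H : Multigraph) where
  vEquiv : G.V ≃ H.V
  eEquiv : G.E ≃ H.E
  ends_eq : ∀ e : G.E, H.ends (eEquiv e) = (G.ends e).map vEquiv

/-- Two multigraphs are isomorphic. -/
def Isomorphic (G H : Multigraph) : Prop := Nonempty (MultigraphIso G H)

/-- Scenario 1: minimum number of tile types over all pots realizing `G`. -/
noncomputable def T1 (G : Multigraph) : ℕ :=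
  sInf {c | ∃ m : ℕ, ∃ P : Pot m, Realizes P G ∧ P.card = c}

/-- Scenario 1: minimum number of bond-edge types over all pots realizing `G`. -/
noncomputable def B1 (G : Multigraph) : ℕ :=
  sInf {m | ∃ P : Pot m, Realizes P G}

/-- Scenario 2: minimum number of tile types over pots `P` with `G ∈ C(P)` and
`m_P = |V(G)|`. -/
noncomputable def T2 (G : Multigraph) : ℕ :=
  sInf {c | ∃ m : ℕ, ∃ P : Pot m, Realizes P G ∧ mP P = G.order ∧ P.card = c}

/-- Scenario 2: minimum number of bond-edge types over pots `P` with `G ∈ C(P)`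
and `m_P = |V(G)|`. -/
noncomputable def B2 (G : Multigraph) : ℕ :=
  sInf {m | ∃ P : Pot m, Realizes P G ∧ mP P = G.order}

/-- Scenario 3: minimum number of tile types over pots `P` with `C_min(P)`
consisting exactly of the multigraphs isomorphic to `G`. -/
noncomputable def T3 (G : Multigraph) : ℕ :=
  sInf {c | ∃ m : ℕ, ∃ P : Pot m, Cmin P = {H | Isomorphic H G} ∧ P.card = c}

/-- Scenario 3: minimum number of bond-edge types over pots `P` with `C_min(P)`
consisting exactly of the multigraphs isomorphic to `G`. -/
noncomputable def B3 (G : Multigraph) : ℕ :=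
  sInf {m | ∃ P : Pot m, Cmin P = {H | Isomorphic H G}}

/-- The degree of a vertex (a loop contributes 2). -/
def Multigraph.degree (G : Multigraph) (v : G.V) : ℕ :=
  ∑ e : G.E, (if v ∈ G.ends e then (if (G.ends e).IsDiag then 2 else 1) else 0)

/-- `av(G)`: the number of distinct vertex degrees in `G`. -/
def av (G : Multigraph) : ℕ := (Finset.univ.image G.degree).card

/-- `ev(G)`: the number of distinct even vertex degrees in `G`. -/
def ev (G : Multigraph) : ℕ :=
  ((Finset.univ.image G.degree).filter (fun d => Even d)).card

/-- `ov(G)`: the number of distinct odd vertex degrees in `G`. -/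
def ov (G : Multigraph) : ℕ :=
  ((Finset.univ.image G.degree).filter (fun d => Odd d)).card

/-- `z i t`: the net number of cohesive ends of type `i` on tile `t`
(unhatted count minus hatted count). -/
def zval {m : ℕ} (i : Fin m) (t : Tile m) : ℤ :=
  (t.count (Sum.inl i) : ℤ) - (t.count (Sum.inr i) : ℤ)

/-- The wheel graph on `n` vertices: the hub is `none`; the outer-cycle
vertices are `some i` for `i : Fin (n-1)`.  Edge `Sum.inl i` is the spoke from
the hub to `some i`; edge `Sum.inr i` is the outer-cycle edge from `some i` to
`some ((i+1) mod (n-1))`. -/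
def wheel (n : ℕ) : Multigraph where
  V := Option (Fin (n - 1))
  E := Fin (n - 1) ⊕ Fin (n - 1)
  ends e :=
    match e with
    | Sum.inl i => s((none : Option (Fin (n - 1))), some i)
    | Sum.inr i => s(some i,
        some ⟨(i.val + 1) % (n - 1), Nat.mod_lt _ (by have := i.isLt; omega)⟩)

/-- The cycle graph on `n` vertices (vertices `none, some 0, …, some (n-2)`,
edge `k` joining the `k`-th and `(k+1 mod n)`-th vertices in this order). -/
def cycleVtx (n : ℕ) (k : Fin n) : Option (Fin (n - 1)) :=
  if h : k.val = 0 then none else some ⟨k.val - 1, by have := k.isLt; omega⟩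

def cycleGraph (n : ℕ) : Multigraph where
  V := Option (Fin (n - 1))
  E := Fin n
  ends k := s(cycleVtx n k,
    cycleVtx n ⟨(k.val + 1) % n, Nat.mod_lt _ (by have := k.isLt; omega)⟩)
/-- Auxiliary: the graph obtained from `G` by replacing the edge `e` by an
edge with endpoints `u, x` and the edge `g` by a loop at `v`. -/
@[reducible] noncomputable def modGraph (G : Multigraph) (e g : G.E) (u x v : G.V) :
    Multigraph :=
  letI : DecidableEq G.E := Classical.decEq _
  { V := G.V, E := G.E,
    fintypeV := G.fintypeV, decEqV := G.decEqV, nonemptyV := G.nonemptyV,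
    fintypeE := G.fintypeE,
    ends := fun f => if f = e then s(u, x) else if f = g then s(v, v) else G.ends f }

/-- Auxiliary: the corresponding rewired assembly. -/
@[reducible] noncomputable def modAssembly {m : ℕ} {G : Multigraph} (A : Assembly m G)
    (e g : G.E) (u x v : G.V) : Assembly m (modGraph G e g u x v) :=
  letI : DecidableEq G.E := Classical.decEq _
  { orient := fun f => if f = e then (u, x) else if f = g then (v, v) else A.orient f,
    label := A.label,
    orient_ends := fun f => by
      show (if f = e then s(u, x) else if f = g then s(v, v) else G.ends f) = _
      by_cases h1 : f = e
      · simp [h1]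
      · by_cases h2 : f = g
        · simp only [if_neg h1, if_pos h2]
        · simp [h1, h2, A.orient_ends f] }

lemma modAssembly_tileOf {m : ℕ} {G : Multigraph} (A : Assembly m G)
    (e g : G.E) (u x v : G.V) (hge : g ≠ e)
    (he : A.orient e = (u, v)) (hg : A.orient g = (v, x))
    (hlab : A.label g = A.label e) (w : G.V) :
    (modAssembly A e g u x v).tileOf w = A.tileOf w := by
  classical
  unfold Assembly.tileOf
  have hmemg : g ∈ (Finset.univ.val : Multiset G.E).erase e :=
    (Multiset.mem_erase_of_ne hge).2 (Finset.mem_univ_val g)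
  have hs : (Finset.univ.val : Multiset G.E)
      = e ::ₘ g ::ₘ (((Finset.univ.val : Multiset G.E).erase e).erase g) := by
    rw [Multiset.cons_erase hmemg, Multiset.cons_erase (Finset.mem_univ_val e)]
  rw [hs, Multiset.cons_bind, Multiset.cons_bind, Multiset.cons_bind, Multiset.cons_bind]
  have hrest : (((Finset.univ.val : Multiset G.E).erase e).erase g).bind
      (fun f => (if ((modAssembly A e g u x v).orient f).1 = w
          then {Sum.inl ((modAssembly A e g u x v).label f)} else 0) +
        (if ((modAssembly A e g u x v).orient f).2 = w
          then {Sum.inr ((modAssembly A e g u x v).label f)} else 0))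
      = (((Finset.univ.val : Multiset G.E).erase e).erase g).bind
      (fun f => (if (A.orient f).1 = w then {Sum.inl (A.label f)} else 0) +
        (if (A.orient f).2 = w then {Sum.inr (A.label f)} else 0)) := by
    apply Multiset.bind_congr
    intro f hf
    have hnd : ((Finset.univ.val : Multiset G.E).erase e).Nodup :=
      Finset.univ.nodup.erase e
    have hfg : f ≠ g := (hnd.mem_erase_iff.1 hf).1
    have hf2 : f ∈ (Finset.univ.val : Multiset G.E).erase e := (hnd.mem_erase_iff.1 hf).2
    have hfe : f ≠ e := (Finset.univ.nodup.mem_erase_iff.1 hf2).1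
    have hO : (modAssembly A e g u x v).orient f = A.orient f := by
      show (if f = e then (u, x) else if f = g then (v, v) else A.orient f) = A.orient f
      simp [hfe, hfg]
    have hL : (modAssembly A e g u x v).label f = A.label f := rfl
    rw [hO, hL]
  rw [hrest]
  have hOe : (modAssembly A e g u x v).orient e = (u, x) := by
    show (if e = e then (u, x) else if e = g then (v, v) else A.orient e) = (u, x)
    simp
  have hOg : (modAssembly A e g u x v).orient g = (v, v) := by
    show (if g = e then (u, x) else if g = g then (v, v) else A.orient g) = (v, v)
    simp [hge]
  have hLe : (modAssembly A e g u x v).label e = A.label e := rfl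
  have hLg : (modAssembly A e g u x v).label g = A.label e := hlab
  rw [hOe, hOg, hLe, hLg, he, hg]
  dsimp only
  abel

lemma aux_no_adjacent {m : ℕ} (G : Multigraph)
    (hloop : ∀ e : G.E, ¬ (G.ends e).IsDiag)
    (P : Pot m) (hP : Cmin P = {H | Isomorphic H G})
    (A : Assembly m G) (hA : ∀ v, A.tileOf v ∈ P)
    (u v : G.V) (e : G.E) (he : A.orient e = (u, v)) :
    A.tileOf u ≠ A.tileOf v := by
  classical
  intro hcontra
  set a := A.label e with ha
  -- u ≠ v
  have huv : u ≠ v := by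
    intro h
    apply hloop e
    rw [A.orient_ends e, he, h]
    exact Sym2.mk_isDiag_iff.2 rfl
  -- the unhatted `a` from edge `e` lies in the tile of `u`, hence of `v`
  have hmem : (Sum.inl a : Fin m ⊕ Fin m) ∈ A.tileOf v := by
    rw [← hcontra]
    unfold Assembly.tileOf
    rw [Multiset.mem_bind]
    refine ⟨e, Finset.mem_univ_val e, ?_⟩
    rw [he]
    simp [huv.symm, ha]
  -- so some edge `g` is oriented out of `v` with label `a`
  unfold Assembly.tileOf at hmem
  rw [Multiset.mem_bind] at hmem
  obtain ⟨g, -, hg⟩ := hmem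
  rw [Multiset.mem_add] at hg
  have hg1 : (A.orient g).1 = v ∧ A.label g = a := by
    rcases hg with hg | hg
    · by_cases h : (A.orient g).1 = v
      · rw [if_pos h, Multiset.mem_singleton] at hg
        exact ⟨h, (Sum.inl.inj hg).symm⟩
      · rw [if_neg h] at hg
        exact absurd hg (Multiset.notMem_zero _)
    · by_cases h : (A.orient g).2 = v
      · rw [if_pos h, Multiset.mem_singleton] at hg
        exact absurd hg (by simp)
      · rw [if_neg h] at hg
        exact absurd hg (Multiset.notMem_zero _)
  obtain ⟨hgv, hglab⟩ := hg1
  have hge : g ≠ e := by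
    intro h
    apply huv
    rw [h, he] at hgv
    exact hgv
  set x := (A.orient g).2 with hx
  have hgor : A.orient g = (v, x) := by rw [hx, ← hgv]
  -- the rewired graph is realized by `P`
  have hH : Realizes P (modGraph G e g u x v) := by
    refine ⟨modAssembly A e g u x v, fun w => ?_⟩
    rw [modAssembly_tileOf A e g u x v hge he hgor hglab w]
    exact hA w
  -- `G` itself is a minimum-order realization
  have hGG : Isomorphic G G :=
    ⟨⟨Equiv.refl _, Equiv.refl _, fun f => by simp [Sym2.map_id]⟩⟩
  have hGmin : G ∈ Cmin P := by rw [hP]; exact hGG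
  have hord : G.order = mP P := hGmin.2
  -- hence the rewired graph is also in `C_min(P)`, so isomorphic to `G`
  have hHmin : modGraph G e g u x v ∈ Cmin P := ⟨hH, hord⟩
  rw [hP] at hHmin
  obtain ⟨φ⟩ := hHmin
  -- but the rewired graph has a loop, contradiction
  have hends := φ.ends_eq g
  have hloopg : (modGraph G e g u x v).ends g = s(v, v) := by
    show (if g = e then s(u, x) else if g = g then s(v, v) else G.ends g) = s(v, v)
    simp [hge]
  rw [hloopg, Sym2.map_pair_eq] at hends
  exact hloop (φ.eEquiv g) (by rw [hends]; exact Sym2.mk_isDiag_iff.2 rfl)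

/-- If `G` is loopless and `C_min(P) = {G}` (up to isomorphism), then in any
assembly of `G` from `P`, no tile type is used on two adjacent vertices. -/
theorem no_adjacent_repeated_tile {m : ℕ} (G : Multigraph)
    (hloop : ∀ e : G.E, ¬ (G.ends e).IsDiag)
    (P : Pot m) (hP : Cmin P = {H | Isomorphic H G})
    (A : Assembly m G) (hA : ∀ v, A.tileOf v ∈ P)
    (u v : G.V) (hadj : ∃ e : G.E, G.ends e = s(u, v)) :
    A.tileOf u ≠ A.tileOf v := by
  obtain ⟨e, he⟩ := hadj
  have horient := A.orient_ends e
  rw [he] at horient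
  rcases Sym2.eq_iff.1 horient with ⟨h1, h2⟩ | ⟨h1, h2⟩
  · exact aux_no_adjacent G hloop P hP A hA u v e (by rw [h1, h2])
  · exact (aux_no_adjacent G hloop P hP A hA v u e (by rw [h2, h1])).symm
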